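/- Lipschitz bound for the inverse pessimistic sigmoid: let a = 1/(e^{2R}+1) for R > 0 and λ ≥ 0, and let f(y) = 2[log(λy + √(λ²y² + 4y - 4y²)) - log(2(1-y))]. Then for all y ∈ [a, 1-a], |f'(y)| ≤ (λ+2)/a + (λ²+6)/(2a²). -/

import Mathlib

open Real

/-- Lipschitz (derivative) bound for the inverse pessimistic sigmoid:
with `a = 1/(e^{2R}+1)` and
`f(y) = 2·(log(λy + √(λ²y² + 4y - 4y²)) - log(2(1-y)))`, for all
`y ∈ [a, 1-a]` one has `|f'(y)| ≤ (λ+2)/a + (λ²+6)/(2a²)`. -/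
theorem inv_pess_sigmoid_deriv_bound (R lam : ℝ) (hR : 0 < R) (hlam : 0 ≤ lam) :
    let a : ℝ := 1 / (exp (2*R) + 1)
    let f : ℝ → ℝ := fun y =>
      2 * (log (lam * y + Real.sqrt (lam^2 * y^2 + 4*y - 4*y^2)) - log (2 * (1 - y)))
    ∀ y ∈ Set.Icc a (1 - a),
      |deriv f y| ≤ (lam + 2) / a + (lam^2 + 6) / (2 * a^2) := by
  intro a f y hy
  have hexp : 1 < exp (2*R) := by
    have : exp 0 < exp (2*R) := exp_lt_exp.mpr (by linarith)
    simpa using this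
  have ha0 : (0:ℝ) < a := by positivity
  have ha2 : a < 1/2 := by
    have h1 : (0:ℝ) < exp (2*R) + 1 := by positivity
    rw [div_lt_div_iff₀ h1 (by norm_num)]
    linarith
  obtain ⟨hya, hyb⟩ := hy
  have hy0 : 0 < y := lt_of_lt_of_le ha0 hya
  have hy1 : y < 1 := by linarith
  have h1y : a ≤ 1 - y := by linarith
  have h1ypos : 0 < 1 - y := by linarith
  set D : ℝ := lam^2 * y^2 + 4*y - 4*y^2 with hDdef
  have hDge : 4 * a^2 ≤ D := by
    nlinarith [sq_nonneg (lam*y), mul_nonneg (sub_nonneg.2 hya) (sub_nonneg.2 (by linarith : y ≤ 1 - a)), mul_nonneg ha0.le (by linarith : (0:ℝ) ≤ 1 - 2*a)]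
  have hDpos : 0 < D := lt_of_lt_of_le (by positivity) hDge
  set s : ℝ := Real.sqrt D with hsdef
  have hs : 2 * a ≤ s := by
    have h1 : Real.sqrt (4 * a^2) ≤ s := Real.sqrt_le_sqrt hDge
    have h2 : Real.sqrt (4 * a^2) = 2 * a := by
      rw [show 4 * a^2 = (2*a)^2 by ring, Real.sqrt_sq (by positivity)]
    linarith
  have hspos : 0 < s := lt_of_lt_of_le (by positivity) hs
  set g : ℝ := lam * y + s with hgdef
  have hg : 2 * a ≤ g := by nlinarith [mul_nonneg hlam hy0.le]
  have hgpos : 0 < g := lt_of_lt_of_le (by positivity) hg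
  -- derivative of D
  have hDder : HasDerivAt (fun x : ℝ => lam^2 * x^2 + 4*x - 4*x^2)
      (2*lam^2*y + 4 - 8*y) y := by
    have h1 : HasDerivAt (fun x : ℝ => x^2) (2*y) y := by
      simpa using hasDerivAt_pow 2 y
    have := ((h1.const_mul (lam^2)).add ((hasDerivAt_id y).const_mul 4)).sub
      (h1.const_mul 4)
    exact this.congr_deriv (by ring)
  have hsder : HasDerivAt (fun x : ℝ => Real.sqrt (lam^2 * x^2 + 4*x - 4*x^2))
      ((2*lam^2*y + 4 - 8*y) / (2*s)) y := hDder.sqrt hDpos.ne'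
  have hgder : HasDerivAt (fun x : ℝ => lam * x + Real.sqrt (lam^2 * x^2 + 4*x - 4*x^2))
      (lam + (2*lam^2*y + 4 - 8*y) / (2*s)) y := by
    have := ((hasDerivAt_id y).const_mul lam).add hsder
    exact this.congr_deriv (by ring)
  have hlogg : HasDerivAt (fun x : ℝ => log (lam * x + Real.sqrt (lam^2 * x^2 + 4*x - 4*x^2)))
      ((lam + (2*lam^2*y + 4 - 8*y) / (2*s)) / g) y := hgder.log hgpos.ne'
  have hinner : HasDerivAt (fun x : ℝ => 2 * (1 - x)) (-2) y := by
    have := ((hasDerivAt_const y (1:ℝ)).sub (hasDerivAt_id y)).const_mul 2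
    exact this.congr_deriv (by ring)
  have hlog2 : HasDerivAt (fun x : ℝ => log (2 * (1 - x))) ((-2) / (2 * (1 - y))) y :=
    hinner.log (by positivity)
  have hf : HasDerivAt f
      (2 * ((lam + (2*lam^2*y + 4 - 8*y) / (2*s)) / g - (-2) / (2 * (1 - y)))) y :=
    (hlogg.sub hlog2).const_mul 2
  rw [hf.deriv]
  -- now bound
  have hd' : |2*lam^2*y + 4 - 8*y| ≤ 2*lam^2 + 12 := by
    rw [abs_le]
    constructor <;> nlinarith [sq_nonneg lam]
  have hfrac : |(2*lam^2*y + 4 - 8*y) / (2*s)| ≤ (lam^2 + 6) / (2*a) := by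
    rw [abs_div, abs_of_pos (by positivity : (0:ℝ) < 2*s)]
    calc |2*lam^2*y + 4 - 8*y| / (2*s) ≤ (2*lam^2 + 12) / (4*a) := by
          apply div_le_div₀ (by positivity) hd' (by positivity)
          linarith
      _ = (lam^2 + 6) / (2*a) := by
          field_simp
          ring
  have hnum : |lam + (2*lam^2*y + 4 - 8*y) / (2*s)| ≤ lam + (lam^2 + 6) / (2*a) := by
    calc |lam + (2*lam^2*y + 4 - 8*y) / (2*s)|
        ≤ |lam| + |(2*lam^2*y + 4 - 8*y) / (2*s)| := abs_add_le _ _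
      _ ≤ lam + (lam^2 + 6) / (2*a) := by
          rw [abs_of_nonneg hlam]; linarith
  have ht1 : |(lam + (2*lam^2*y + 4 - 8*y) / (2*s)) / g| ≤ (lam + (lam^2 + 6) / (2*a)) / (2*a) := by
    rw [abs_div, abs_of_pos hgpos]
    exact div_le_div₀ (by positivity) hnum (by positivity) hg
  have ht2 : |(-2 : ℝ) / (2 * (1 - y))| ≤ 1 / a := by
    rw [abs_div, abs_of_pos (by positivity : (0:ℝ) < 2*(1-y))]
    rw [div_le_div_iff₀ (by positivity) ha0]
    rw [abs_of_nonpos (by norm_num : (-2:ℝ) ≤ 0)]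
    nlinarith
  calc |2 * ((lam + (2*lam^2*y + 4 - 8*y) / (2*s)) / g - (-2) / (2 * (1 - y)))|
      = 2 * |(lam + (2*lam^2*y + 4 - 8*y) / (2*s)) / g - (-2) / (2 * (1 - y))| := by
        rw [abs_mul]; norm_num
    _ ≤ 2 * (|(lam + (2*lam^2*y + 4 - 8*y) / (2*s)) / g| + |(-2:ℝ) / (2 * (1 - y))|) := by
        have := abs_sub ((lam + (2*lam^2*y + 4 - 8*y) / (2*s)) / g) ((-2:ℝ) / (2 * (1 - y)))
        linarith
    _ ≤ 2 * ((lam + (lam^2 + 6) / (2*a)) / (2*a) + 1 / a) := by linarith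
    _ = (lam + 2) / a + (lam^2 + 6) / (2 * a^2) := by
        field_simp
        ring
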